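/- Let (X,d) be a possibly non-symmetric metric space such that the symmetrised metric d̂ is proper, geodesics exist between any two points, and d(x_n,x) → 0 iff d(x,x_n) → 0. Then the map φ : X → C(X), z ↦ φ_z (with φ_z(x) = d(x,z) − d(b,z)), is a homeomorphism onto its image, where C(X) carries the topology of uniform convergence on d̂-bounded sets; moreover, if a sequence (z_n) satisfies φ_{z_n} → φ_p for some p ∈ X, then z_n → p in X. -/
import Mathlib


/-- in a possibly non-symmetric metric space whose symmetrised metric is
proper, with geodesics for `d` and the topology condition, the map `z ↦ φ_z` is a
homeomorphism onto its image, where the target carries the topology of uniform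
convergence on bounded sets: it is injective, continuous (convergent sequences are sent
to sequences converging uniformly on bounded sets), and if `φ_{z n} → φ_p` uniformly on
bounded sets then `z n → p` in `X`. -/
theorem horofunction_map_embedding {X : Type*} [MetricSpace X]
    (d : X → X → ℝ) (b : X)
    (hpos : ∀ x y, 0 ≤ d x y) (hzero : ∀ x y, d x y = 0 ↔ x = y)
    (htri : ∀ x y z, d x z ≤ d x y + d y z)
    (hdist : ∀ x y : X, dist x y = d x y + d y x)
    (hproper : ProperSpace X)
    (hgeo : ∀ x y : X, ∃ γ : ℝ → X, γ 0 = x ∧ γ (d x y) = y ∧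
      ∀ s t : ℝ, 0 ≤ s → s ≤ t → t ≤ d x y → d (γ s) (γ t) = t - s)
    (htop : ∀ (x : X) (u : ℕ → X),
      Filter.Tendsto (fun n => d (u n) x) Filter.atTop (nhds 0) ↔
        Filter.Tendsto (fun n => d x (u n)) Filter.atTop (nhds 0)) :
    Function.Injective (fun z : X => fun x : X => d x z - d b z) ∧
    (∀ (z : ℕ → X) (w : X), Filter.Tendsto z Filter.atTop (nhds w) →
      ∀ r : ℝ, TendstoUniformlyOn (fun n x => d x (z n) - d b (z n))
        (fun x => d x w - d b w) Filter.atTop { x : X | dist b x ≤ r }) ∧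
    (∀ (z : ℕ → X) (p : X),
      (∀ r : ℝ, TendstoUniformlyOn (fun n x => d x (z n) - d b (z n))
        (fun x => d x p - d b p) Filter.atTop { x : X | dist b x ≤ r }) →
      Filter.Tendsto z Filter.atTop (nhds p)) := by
  refine ⟨?_, ?_, ?_⟩
  · -- Injectivity
    intro z w h
    have hz := congrFun h z
    have hw := congrFun h w
    simp only at hz hw
    have h1 : d z z = 0 := (hzero z z).2 rfl
    have h2 : d w w = 0 := (hzero w w).2 rfl
    have hd : dist z w = d z w + d w z := hdist z w
    have : dist z w = 0 := by linarith
    exact dist_eq_zero.mp this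
  · -- Continuity
    intro z w hzw r
    rw [Metric.tendstoUniformlyOn_iff]
    intro ε hε
    obtain ⟨N, hN⟩ := Metric.tendsto_atTop.mp hzw (ε / 2) (by linarith)
    refine Filter.eventually_atTop.2 ⟨N, fun n hn x _ => ?_⟩
    have t1 : d x w ≤ d x (z n) + d (z n) w := htri _ _ _
    have t2 : d x (z n) ≤ d x w + d w (z n) := htri _ _ _
    have t3 : d b w ≤ d b (z n) + d (z n) w := htri _ _ _
    have t4 : d b (z n) ≤ d b w + d w (z n) := htri _ _ _
    have hd : dist (z n) w = d (z n) w + d w (z n) := hdist _ _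
    have hp1 : 0 ≤ d (z n) w := hpos _ _
    have hp2 : 0 ≤ d w (z n) := hpos _ _
    have hNn : dist (z n) w < ε / 2 := hN n hn
    rw [Real.dist_eq]
    rw [abs_lt]
    constructor <;> linarith
  · -- The converse
    intro z p hconv
    have hdpp : d p p = 0 := (hzero p p).2 rfl
    -- pointwise convergence at p : A n → 0 where A n = d p (z n) - d b (z n) + d b p
    have hpoint : Filter.Tendsto (fun n => d p (z n) - d b (z n) + d b p)
        Filter.atTop (nhds 0) := by
      have hp : p ∈ { x : X | dist b x ≤ dist b p } := by simp
      have h := (hconv (dist b p)).tendsto_at hp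
      have h' := h.add_const (d b p)
      rw [hdpp] at h'
      simpa using h'
    -- key claim: d p (z n) → 0
    have key : ∀ s : ℝ, 0 < s → ∀ᶠ n in Filter.atTop, d p (z n) < s := by
      intro s hs
      by_contra hcon
      rw [Filter.not_eventually] at hcon
      have hcon' : ∃ᶠ n in Filter.atTop, s ≤ d p (z n) := by
        apply hcon.mono
        intro n hn
        exact le_of_not_gt hn
      obtain ⟨φ, hφmono, hφ⟩ := Filter.extraction_of_frequently_atTop hcon'
      -- geodesics from p to z (φ k)
      have hg : ∀ k : ℕ, ∃ γ : ℝ → X, γ 0 = p ∧ γ (d p (z (φ k))) = z (φ k) ∧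
          ∀ s' t : ℝ, 0 ≤ s' → s' ≤ t → t ≤ d p (z (φ k)) → d (γ s') (γ t) = t - s' :=
        fun k => hgeo p (z (φ k))
      choose γ hγ0 hγL hγd using hg
      have hdpx : ∀ (k : ℕ) (t : ℝ), 0 ≤ t → t ≤ s → d p (γ k t) = t := by
        intro k t ht hts
        have := hγd k 0 t le_rfl ht (le_trans hts (hφ k))
        rw [hγ0 k] at this
        linarith
      have hdxz : ∀ (k : ℕ) (t : ℝ), 0 ≤ t → t ≤ s →
          d (γ k t) (z (φ k)) = d p (z (φ k)) - t := by
        intro k t ht hts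
        have := hγd k t (d p (z (φ k))) ht (le_trans hts (hφ k)) le_rfl
        rw [hγL k] at this
        linarith
      -- for each parameter t ∈ (0,s], d (γ k t) p → ∞
      have claim2 : ∀ t : ℝ, 0 < t → t ≤ s → ∀ M : ℝ, ∃ K : ℕ, ∀ k ≥ K,
          M < d (γ k t) p := by
        intro t ht hts M
        set r : ℝ := M + d b p + t + d p b with hr
        have hunif := Metric.tendstoUniformlyOn_iff.mp (hconv r) (t / 2) (by linarith)
        obtain ⟨N1, hN1⟩ := Filter.eventually_atTop.mp hunif
        obtain ⟨N3, hN3⟩ := Metric.tendsto_atTop.mp hpoint (t / 2) (by linarith)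
        refine ⟨max N1 N3, fun k hk => ?_⟩
        have hφk1 : N1 ≤ φ k := le_trans (le_trans (le_max_left _ _) hk) (hφmono.le_apply)
        have hφk3 : N3 ≤ φ k := le_trans (le_trans (le_max_right _ _) hk) (hφmono.le_apply)
        by_contra hle
        push_neg at hle
        set x := γ k t with hx
        have h1 : d p x = t := hdpx k t (le_of_lt ht) hts
        have h2 : d x (z (φ k)) = d p (z (φ k)) - t := hdxz k t (le_of_lt ht) hts
        have hbx : d b x ≤ d b p + t := by
          have := htri b p x; rw [h1] at this; linarith
        have hxb : d x b ≤ M + d p b := by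
          have := htri x p b; linarith
        have hmem : x ∈ { y : X | dist b y ≤ r } := by
          have := hdist b x
          simp only [Set.mem_setOf_eq]
          rw [this]; linarith
        have hub := hN1 (φ k) hφk1 x hmem
        have hA := hN3 (φ k) hφk3
        rw [Real.dist_eq, sub_zero, abs_lt] at hA
        rw [Real.dist_eq, abs_lt] at hub
        have hxp : 0 ≤ d x p := hpos _ _
        rw [h2] at hub
        -- hub : |(d x p - d b p) - (d p z - t - d b z)| < t/2
        obtain ⟨hub1, hub2⟩ := hub
        obtain ⟨hA1, hA2⟩ := hA
        linarith
      -- diagonal sequence contradicting htop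
      have hpick : ∀ m : ℕ, ∃ K : ℕ, ∀ k ≥ K, (1 : ℝ) < d (γ k (s / (m + 1))) p := by
        intro m
        refine claim2 (s / (m + 1)) ?_ ?_ 1
        · positivity
        · rw [div_le_iff₀ (by positivity)]
          nlinarith [hs, (Nat.cast_nonneg m : (0:ℝ) ≤ m)]
      choose K hK using hpick
      set u : ℕ → X := fun m => γ (K m) (s / (m + 1)) with hu
      have hdu : ∀ m : ℕ, d p (u m) = s / (m + 1) := by
        intro m
        refine hdpx (K m) _ (by positivity) ?_
        rw [div_le_iff₀ (by positivity)]
        nlinarith [hs, (Nat.cast_nonneg m : (0:ℝ) ≤ m)]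
      have htend : Filter.Tendsto (fun m => d p (u m)) Filter.atTop (nhds 0) := by
        have h0 : Filter.Tendsto (fun m : ℕ => s * (1 / ((m : ℝ) + 1)))
            Filter.atTop (nhds (s * 0)) :=
          tendsto_one_div_add_atTop_nhds_zero_nat.const_mul s
        rw [mul_zero] at h0
        have : (fun m : ℕ => d p (u m)) = fun m : ℕ => s * (1 / ((m : ℝ) + 1)) := by
          funext m
          rw [hdu m]
          ring
        rw [this]
        exact h0
      have hback := (htop p u).2 htend
      obtain ⟨N, hN⟩ := Metric.tendsto_atTop.mp hback 1 one_pos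
      have h2 := hN N le_rfl
      rw [Real.dist_eq, sub_zero, abs_lt] at h2
      have h1 : 1 < d (u N) p := by
        simpa [hu] using hK N (K N) le_rfl
      linarith [h2.2]
    -- conclude
    have hfwd : Filter.Tendsto (fun n => d p (z n)) Filter.atTop (nhds 0) := by
      rw [Metric.tendsto_atTop]
      intro ε hε
      obtain ⟨N, hN⟩ := Filter.eventually_atTop.mp (key ε hε)
      refine ⟨N, fun n hn => ?_⟩
      rw [Real.dist_eq, sub_zero, abs_of_nonneg (hpos _ _)]
      exact hN n hn
    have hbwd : Filter.Tendsto (fun n => d (z n) p) Filter.atTop (nhds 0) :=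
      (htop p z).2 hfwd
    rw [tendsto_iff_dist_tendsto_zero]
    have hsum : Filter.Tendsto (fun n => d (z n) p + d p (z n)) Filter.atTop (nhds 0) := by
      have := hbwd.add hfwd
      rwa [add_zero] at this
    have : (fun n => dist (z n) p) = fun n => d (z n) p + d p (z n) := by
      funext n; exact hdist _ _
    rw [this]
    exact hsum
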